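/- (Landau's bound) For every nonzero polynomial P(x) = \sum_{k=0}^{d} c_k x^k with complex coefficients, the Mahler measure satisfies M(P) \leq \sqrt{\sum_{k=0}^{d} |c_k|^2}. -/

import Mathlib

open Polynomial

/-- The Mahler measure of a complex polynomial `P`: the absolute value of its leading
coefficient times the product of `max 1 |z|` over its complex roots `z` (with multiplicity). -/
noncomputable def mahlerMeasureC (P : Polynomial ℂ) : ℝ :=
  ‖P.leadingCoeff‖ * (P.roots.map fun z => max 1 ‖z‖).prod

lemma l2sq_summable (P : Polynomial ℂ) :
    Summable (fun k => ‖P.coeff k‖ ^ 2) := by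
  apply summable_of_ne_finset_zero (s := Finset.range (P.natDegree + 1))
  intro k hk
  rw [P.coeff_eq_zero_of_natDegree_lt (by simpa using Nat.lt_of_succ_le (by simpa using hk))]
  simp

noncomputable def l2sq (P : Polynomial ℂ) : ℝ := ∑' k, ‖P.coeff k‖ ^ 2

lemma l2sq_eq_sum (P : Polynomial ℂ) (m : ℕ) (hm : P.natDegree < m) :
    l2sq P = ∑ k ∈ Finset.range m, ‖P.coeff k‖ ^ 2 := by
  apply tsum_eq_sum
  intro k hk
  rw [P.coeff_eq_zero_of_natDegree_lt (lt_of_lt_of_le hm (by simpa using hk))]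
  simp

lemma l2sq_X_mul (R : Polynomial ℂ) : l2sq (Polynomial.X * R) = l2sq R := by
  unfold l2sq
  rw [Summable.tsum_eq_zero_add (l2sq_summable _)]
  simp [Polynomial.coeff_X_mul]

lemma key_ptwise (s r z : ℂ) :
    ‖s - z * r‖ ^ 2 + ‖z‖ ^ 2 * ‖s‖ ^ 2 + ‖r‖ ^ 2 =
    ‖(starRingEnd ℂ) z * s - r‖ ^ 2 + ‖s‖ ^ 2 + ‖z‖ ^ 2 * ‖r‖ ^ 2 := by
  simp only [Complex.sq_norm, Complex.normSq_apply, Complex.sub_re, Complex.sub_im,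
    Complex.mul_re, Complex.mul_im, Complex.conj_re, Complex.conj_im]
  ring

lemma swap_lemma (z : ℂ) (R : Polynomial ℂ) :
    l2sq ((Polynomial.X - Polynomial.C z) * R) =
    l2sq ((Polynomial.C ((starRingEnd ℂ) z) * Polynomial.X - 1) * R) := by
  have hc1 : ∀ k, ((Polynomial.X - Polynomial.C z) * R).coeff k
      = (Polynomial.X * R).coeff k - z * R.coeff k := by
    intro k; rw [sub_mul, Polynomial.coeff_sub, Polynomial.coeff_C_mul]
  have hc2 : ∀ k, ((Polynomial.C ((starRingEnd ℂ) z) * Polynomial.X - 1) * R).coeff k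
      = (starRingEnd ℂ) z * (Polynomial.X * R).coeff k - R.coeff k := by
    intro k
    rw [sub_mul, Polynomial.coeff_sub, one_mul, mul_assoc, Polynomial.coeff_C_mul]
  have hS := l2sq_summable (Polynomial.X * R)
  have hR := l2sq_summable R
  have hA := l2sq_summable ((Polynomial.X - Polynomial.C z) * R)
  have hB := l2sq_summable ((Polynomial.C ((starRingEnd ℂ) z) * Polynomial.X - 1) * R)
  have hsum : l2sq ((Polynomial.X - Polynomial.C z) * R)
        + (‖z‖ ^ 2 * l2sq (Polynomial.X * R) + l2sq R)
      = l2sq ((Polynomial.C ((starRingEnd ℂ) z) * Polynomial.X - 1) * R)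
        + (l2sq (Polynomial.X * R) + ‖z‖ ^ 2 * l2sq R) := by
    unfold l2sq
    rw [← tsum_mul_left, ← tsum_mul_left, ← Summable.tsum_add (hS.mul_left _) hR,
      ← Summable.tsum_add hS (hR.mul_left _), ← Summable.tsum_add hA ((hS.mul_left _).add hR),
      ← Summable.tsum_add hB (hS.add (hR.mul_left _))]
    congr 1
    funext k
    rw [hc1, hc2]
    have := key_ptwise ((Polynomial.X * R).coeff k) (R.coeff k) z
    linarith [this]
  rw [l2sq_X_mul] at hsum
  linarith [hsum]

noncomputable def gfac (z : ℂ) : Polynomial ℂ :=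
  if 1 < ‖z‖ then Polynomial.C ((starRingEnd ℂ) z) * Polynomial.X - 1
  else Polynomial.X - Polynomial.C z

lemma abs_lead_gfac (z : ℂ) :
    ‖(gfac z).leadingCoeff‖ = max 1 (‖z‖) := by
  unfold gfac
  split_ifs with h
  · have hz0 : z ≠ 0 := by intro h0; rw [h0] at h; norm_num at h
    have hz : (starRingEnd ℂ) z ≠ 0 := by simpa using hz0
    have : Polynomial.C ((starRingEnd ℂ) z) * Polynomial.X - 1
        = Polynomial.C ((starRingEnd ℂ) z) * Polynomial.X + Polynomial.C (-1) := by
      simp [sub_eq_add_neg]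
    rw [this, Polynomial.leadingCoeff_linear hz]
    rw [Complex.norm_conj]
    exact (max_eq_right (le_of_lt h)).symm
  · rw [Polynomial.leadingCoeff_X_sub_C]
    simp [le_of_not_gt h]

lemma l2sq_prod_swap (t : Multiset ℂ) : ∀ R : Polynomial ℂ,
    l2sq ((t.map fun z => Polynomial.X - Polynomial.C z).prod * R)
      = l2sq ((t.map gfac).prod * R) := by
  induction t using Multiset.induction_on with
  | empty => intro R; simp
  | cons z t ih =>
    intro R
    rw [Multiset.map_cons, Multiset.map_cons, Multiset.prod_cons, Multiset.prod_cons]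
    have h1 : (Polynomial.X - Polynomial.C z)
          * (t.map fun z => Polynomial.X - Polynomial.C z).prod * R
        = (t.map fun z => Polynomial.X - Polynomial.C z).prod
          * ((Polynomial.X - Polynomial.C z) * R) := by ring
    rw [h1, ih ((Polynomial.X - Polynomial.C z) * R)]
    have h2 : (t.map gfac).prod * ((Polynomial.X - Polynomial.C z) * R)
        = (Polynomial.X - Polynomial.C z) * ((t.map gfac).prod * R) := by ring
    rw [h2]
    by_cases h : 1 < ‖z‖
    · rw [swap_lemma, show gfac z = Polynomial.C ((starRingEnd ℂ) z) * Polynomial.X - 1 from if_pos h,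
        mul_assoc]
    · rw [show gfac z = Polynomial.X - Polynomial.C z from if_neg h, mul_assoc]

lemma multiset_prod_max_nonneg (t : Multiset ℂ) :
    0 ≤ (t.map fun z => max 1 (‖z‖)).prod := by
  apply Multiset.prod_nonneg
  intro x hx
  obtain ⟨z, _, rfl⟩ := Multiset.mem_map.1 hx
  positivity

/-- Landau's bound: For every nonzero complex polynomial
`P = ∑_{k=0}^d c_k x^k`, the Mahler measure satisfies `M(P) ≤ √(∑_{k=0}^d |c_k|²)`. -/
theorem stmt_13 (d : ℕ) (P : Polynomial ℂ) (hP : P ≠ 0) (hd : P.natDegree ≤ d) :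
    mahlerMeasureC P ≤ Real.sqrt (∑ k ∈ Finset.range (d + 1), ‖P.coeff k‖ ^ 2) := by
  set a := P.leadingCoeff with ha
  set t := P.roots with ht
  have hfact : P = Polynomial.C a * (t.map fun z => Polynomial.X - Polynomial.C z).prod :=
    (IsAlgClosed.splits P).eq_prod_roots
  set Q : Polynomial ℂ := Polynomial.C a * (t.map gfac).prod with hQ
  -- l2sq Q = l2sq P
  have hl2 : l2sq Q = l2sq P := by
    have e1 : (t.map fun z => Polynomial.X - Polynomial.C z).prod * Polynomial.C a
        = P := by rw [hfact]; ring
    have e2 : (t.map gfac).prod * Polynomial.C a = Q := by rw [hQ]; ring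
    rw [← e2, ← l2sq_prod_swap, e1]
  -- leading coefficient of Q
  have hlead : ‖Q.leadingCoeff‖ = mahlerMeasureC P := by
    rw [hQ, Polynomial.leadingCoeff_mul, Polynomial.leadingCoeff_C, norm_mul]
    unfold mahlerMeasureC
    congr 1
    rw [← Polynomial.leadingCoeffHom_apply, map_multiset_prod, Multiset.map_map,
      ← normHom_apply, map_multiset_prod, Multiset.map_map, ← ht]
    apply congrArg
    apply Multiset.map_congr rfl
    intro z _
    exact abs_lead_gfac z
  -- |lead Q|^2 ≤ l2sq Q
  have hle : ‖Q.leadingCoeff‖ ^ 2 ≤ l2sq Q := by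
    rw [Polynomial.leadingCoeff]
    exact Summable.le_tsum (l2sq_summable Q) Q.natDegree (fun j _ => by positivity)
  have hM : mahlerMeasureC P ^ 2 ≤ l2sq P := by
    rw [← hlead, ← hl2] at *
    exact hle
  have hMnn : 0 ≤ mahlerMeasureC P := by
    unfold mahlerMeasureC
    exact mul_nonneg (norm_nonneg _) (multiset_prod_max_nonneg _)
  have hsum : l2sq P = ∑ k ∈ Finset.range (d + 1), ‖P.coeff k‖ ^ 2 :=
    l2sq_eq_sum P (d + 1) (Nat.lt_succ_of_le hd)
  rw [← hsum]
  exact (Real.le_sqrt hMnn (le_trans (by positivity) hM)).2 hM
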